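/- Let G=(V,E) be a finite simple graph, s,t ∈ V two distinct terminal nodes, d a positive integer, and p : E → [0,1] edge reliabilities. Let P = (v₁,…,v_n) be a path in G, with edges eᵢ = {vᵢ,v_{i+1}} for i = 1,…,n−1, such that P is an induced subgraph of G, each internal vertex v₂,…,v_{n−1} is non-terminal and has degree 2 in G. Define p' : E → [0,1] by p'(eᵢ) = 1 for i = 1,…,n−2, p'(e_{n−1}) = ∏_{i=1}^{n−1} p(eᵢ), and p'(e) = p(e) for every edge e not on P. Then R^d_{{s,t},G}(p) = R^d_{{s,t},G}(p'). -/

import Mathlib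

open Classical Finset

noncomputable section

/-- The two-terminal diameter-constrained structure function `φ_d`:
`PhiStruct s t d E'` holds iff the spanning subgraph `(V, E')` contains a simple
`s`–`t` path with at most `d` edges. -/
def PhiStruct {V : Type*} (s t : V) (d : ℕ) (E' : Finset (Sym2 V)) : Prop :=
  ∃ w : (SimpleGraph.fromEdgeSet (↑E' : Set (Sym2 V))).Walk s t, w.IsPath ∧ w.length ≤ d

/-- The edge `e` is irrelevant for `φ_d`: `φ_d (E' ∪ {e}) = φ_d (E' \ {e})`
for every subset `E'` of the edge set of `G`. -/
def Irrelevant {V : Type*} [Fintype V] [DecidableEq V]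
    (G : SimpleGraph V) [DecidableRel G.Adj] (s t : V) (d : ℕ) (e : Sym2 V) : Prop :=
  ∀ E' ⊆ G.edgeFinset,
    (PhiStruct s t d (insert e E') ↔ PhiStruct s t d (E'.erase e))

/-- The two-terminal diameter-constrained reliability of the network whose edge set is
the finite set `E`, with terminals `s, t`, diameter `d` and elementary reliabilities `p`:
`R = Σ_{E' ⊆ E} (Π_{e ∈ E'} p e) (Π_{e ∈ E \ E'} (1 - p e)) φ_d(E')`. -/
def DCR {V : Type*} [DecidableEq V] (E : Finset (Sym2 V)) (s t : V) (d : ℕ)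
    (p : Sym2 V → ℝ) : ℝ :=
  ∑ E' ∈ E.powerset,
    (∏ e ∈ E', p e) * (∏ e ∈ E \ E', (1 - p e)) * (if PhiStruct s t d E' then 1 else 0)

namespace PerfectPathAux

open SimpleGraph

variable {V : Type*}

/-- At an interior vertex of a path there are two distinct incident edges. -/
lemma two_edges_at {H : SimpleGraph V} {s t x : V} (u : H.Walk s t)
    (hu : u.IsPath) (hx : x ∈ u.support) (hxs : x ≠ s) (hxt : x ≠ t) :
    ∃ e1 ∈ u.edges, ∃ e2 ∈ u.edges, e1 ≠ e2 ∧ x ∈ e1 ∧ x ∈ e2 := by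
  classical
  have hspec := u.take_spec hx
  have hedges : u.edges = (u.takeUntil x hx).edges ++ (u.dropUntil x hx).edges := by
    conv_lhs => rw [← hspec]
    rw [SimpleGraph.Walk.edges_append]
  obtain ⟨y, hy, q2', hq2'⟩ := (u.dropUntil x hx).exists_eq_cons_of_ne hxt
  obtain ⟨z, hz, q1', hq1'⟩ := (u.takeUntil x hx).reverse.exists_eq_cons_of_ne hxs
  have he2 : s(x, y) ∈ (u.dropUntil x hx).edges := by
    rw [hq2', SimpleGraph.Walk.edges_cons]; exact List.mem_cons_self
  have he1 : s(x, z) ∈ (u.takeUntil x hx).edges := by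
    have : s(x, z) ∈ (u.takeUntil x hx).reverse.edges := by
      rw [hq1', SimpleGraph.Walk.edges_cons]; exact List.mem_cons_self
    rwa [SimpleGraph.Walk.edges_reverse, List.mem_reverse] at this
  have hnd : ((u.takeUntil x hx).edges ++ (u.dropUntil x hx).edges).Nodup := by
    rw [← hedges]; exact hu.isTrail.edges_nodup
  have hdisj := List.disjoint_of_nodup_append hnd
  refine ⟨s(x, z), ?_, s(x, y), ?_, ?_, ?_, ?_⟩
  · rw [hedges]; exact List.mem_append_left _ he1
  · rw [hedges]; exact List.mem_append_right _ he2
  · intro h; exact hdisj he1 (h ▸ he2)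
  · exact Sym2.mem_mk_left x z
  · exact Sym2.mem_mk_left x y

/-- Any `G`-edge incident to an interior vertex of degree 2 of a path `u` (in a
subgraph of `G`) belongs to `u`. -/
lemma mem_edges_of_incident [Fintype V] [DecidableEq V] {G : SimpleGraph V}
    [DecidableRel G.Adj] {H : SimpleGraph V} (hle : H ≤ G) {s t x : V}
    (u : H.Walk s t) (hu : u.IsPath) (hx : x ∈ u.support) (hxs : x ≠ s) (hxt : x ≠ t)
    (hdeg : G.degree x = 2) {e : Sym2 V} (he : e ∈ G.edgeSet) (hxe : x ∈ e) :
    e ∈ u.edges := by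
  classical
  obtain ⟨e1, he1, e2, he2, hne, hx1, hx2⟩ := two_edges_at u hu hx hxs hxt
  have hmemG : ∀ f ∈ u.edges, f ∈ G.edgeSet := fun f hf =>
    SimpleGraph.edgeSet_subset_edgeSet.mpr hle (u.edges_subset_edgeSet hf)
  have hsub : ({e1, e2} : Finset (Sym2 V)) ⊆ G.incidenceFinset x := by
    intro f hf
    rw [SimpleGraph.mem_incidenceFinset]
    rcases Finset.mem_insert.mp hf with rfl | hf
    · exact ⟨hmemG _ he1, hx1⟩
    · rw [Finset.mem_singleton] at hf; subst hf
      exact ⟨hmemG _ he2, hx2⟩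
  have hcard2 : ({e1, e2} : Finset (Sym2 V)).card = 2 := by
    rw [Finset.card_insert_of_notMem (by simpa using hne), Finset.card_singleton]
  have hcard : (G.incidenceFinset x).card ≤ ({e1, e2} : Finset (Sym2 V)).card := by
    rw [hcard2, SimpleGraph.card_incidenceFinset_eq_degree, hdeg]
  have heq : ({e1, e2} : Finset (Sym2 V)) = G.incidenceFinset x :=
    Finset.eq_of_subset_of_card_le hsub hcard
  have hein : e ∈ G.incidenceFinset x :=
    (SimpleGraph.mem_incidenceFinset (G := G) (v := x) e).mpr ⟨he, hxe⟩
  rw [← heq] at hein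
  rcases Finset.mem_insert.mp hein with rfl | hein
  · exact he1
  · rw [Finset.mem_singleton] at hein; subst hein; exact he2

/-- If a path `u` (in a subgraph of `G`) shares an edge with a path `q` of `G` all of
whose interior vertices are non-terminal of degree `2`, then `u` contains every edge
of `q`. -/
lemma edges_subset_of_inter [Fintype V] [DecidableEq V] {G : SimpleGraph V}
    [DecidableRel G.Adj] {H : SimpleGraph V} (hle : H ≤ G) {s t : V}
    (u : H.Walk s t) (hu : u.IsPath) :
    ∀ (c b : V) (q : G.Walk c b), q.IsPath →
      (∀ v ∈ q.support, v ≠ c → v ≠ b → v ≠ s ∧ v ≠ t ∧ G.degree v = 2) →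
      (∃ e ∈ q.edges, e ∈ u.edges) → ∀ e ∈ q.edges, e ∈ u.edges := by
  intro c b q
  induction q with
  | nil => simp
  | @cons c x b h q' ih =>
    intro hq hint hex
    rw [SimpleGraph.Walk.cons_isPath_iff] at hq
    obtain ⟨hq', hcns⟩ := hq
    have hint' : ∀ v ∈ q'.support, v ≠ x → v ≠ b → v ≠ s ∧ v ≠ t ∧ G.degree v = 2 := by
      intro v hv hvx hvb
      refine hint v (by rw [SimpleGraph.Walk.support_cons]; exact List.mem_cons_of_mem _ hv)
        (fun hvc => hcns (hvc ▸ hv)) hvb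
    by_cases hxb : x = b
    · subst hxb
      have hnil : q' = SimpleGraph.Walk.nil := (SimpleGraph.Walk.isPath_iff_eq_nil).mp hq'
      subst hnil
      obtain ⟨e0, he0q, he0u⟩ := hex
      simp only [SimpleGraph.Walk.edges_cons, SimpleGraph.Walk.edges_nil,
        List.mem_singleton] at he0q ⊢
      intro e he; rw [he, ← he0q]; exact he0u
    · -- x is an interior vertex
      obtain ⟨y, hxy, q'', hq''⟩ := q'.exists_eq_cons_of_ne hxb
      have hxmem : x ∈ (SimpleGraph.Walk.cons h q').support := by
        rw [SimpleGraph.Walk.support_cons]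
        exact List.mem_cons_of_mem _ q'.start_mem_support
      obtain ⟨hxs, hxt, hdeg⟩ := hint x hxmem h.ne' hxb
      have hfq' : s(x, y) ∈ q'.edges := by
        rw [hq'', SimpleGraph.Walk.edges_cons]; exact List.mem_cons_self
      have hxu : x ∈ u.support := by
        obtain ⟨e0, he0q, he0u⟩ := hex
        rw [SimpleGraph.Walk.edges_cons] at he0q
        rcases List.mem_cons.mp he0q with rfl | he0q
        · exact u.snd_mem_support_of_mem_edges he0u
        · have hall := ih hq' hint' ⟨e0, he0q, he0u⟩
          exact u.fst_mem_support_of_mem_edges (hall _ hfq')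
      have hcx : s(c, x) ∈ u.edges := by
        refine mem_edges_of_incident hle u hu hxu hxs hxt hdeg ?_ ?_
        · exact h
        · exact Sym2.mem_mk_right c x
      have hfu : s(x, y) ∈ u.edges := by
        refine mem_edges_of_incident hle u hu hxu hxs hxt hdeg ?_ ?_
        · exact hxy
        · exact Sym2.mem_mk_left x y
      have hall := ih hq' hint' ⟨s(x, y), hfq', hfu⟩
      intro e he
      rw [SimpleGraph.Walk.edges_cons] at he
      rcases List.mem_cons.mp he with rfl | he
      · exact hcx
      · exact hall _ he

/-- Key equivalence: adding a proper subset of the path edges does not change `φ`. -/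
lemma phi_eq [Fintype V] [DecidableEq V] (G : SimpleGraph V) [DecidableRel G.Adj]
    (s t : V) (d : ℕ) {a b : V} (w : G.Walk a b) (hw : w.IsPath)
    (hint : ∀ v ∈ w.support, v ≠ a → v ≠ b → v ≠ s ∧ v ≠ t ∧ G.degree v = 2)
    {F S : Finset (Sym2 V)} (hF : F ⊆ G.edgeFinset \ w.edges.toFinset)
    (hS : S ⊆ w.edges.toFinset) (hSne : S ≠ w.edges.toFinset) :
    PhiStruct s t d (F ∪ S) ↔ PhiStruct s t d F := by
  classical
  have hPsub : w.edges.toFinset ⊆ G.edgeFinset := fun e he =>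
    SimpleGraph.mem_edgeFinset.mpr (w.edges_subset_edgeSet (List.mem_toFinset.mp he))
  have hFS_sub : (F ∪ S) ⊆ G.edgeFinset :=
    Finset.union_subset (hF.trans (Finset.sdiff_subset)) (hS.trans hPsub)
  constructor
  · rintro ⟨u, hu, hlen⟩
    have hle : SimpleGraph.fromEdgeSet (↑(F ∪ S) : Set (Sym2 V)) ≤ G := by
      intro v w' hadj
      rw [SimpleGraph.fromEdgeSet_adj] at hadj
      exact (G.mem_edgeSet).mp
        (SimpleGraph.mem_edgeFinset.mp (hFS_sub (Finset.mem_coe.mp hadj.1)))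
    have hedges : ∀ e ∈ u.edges, e ∈ (SimpleGraph.fromEdgeSet (↑F : Set (Sym2 V))).edgeSet := by
      intro e he
      have he' := u.edges_subset_edgeSet he
      rw [SimpleGraph.edgeSet_fromEdgeSet] at he' ⊢
      obtain ⟨hmem, hnd⟩ := he'
      refine ⟨?_, hnd⟩
      have hmem' : e ∈ F ∪ S := Finset.mem_coe.mp hmem
      by_cases heS : e ∈ S
      · exfalso
        have hew : e ∈ w.edges := List.mem_toFinset.mp (hS heS)
        have hall := edges_subset_of_inter hle u hu a b w hw hint ⟨e, hew, he⟩
        have hsub : w.edges.toFinset ⊆ S := by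
          intro f hf
          have hfw : f ∈ w.edges := List.mem_toFinset.mp hf
          have hfu : f ∈ u.edges := hall _ hfw
          have := u.edges_subset_edgeSet hfu
          rw [SimpleGraph.edgeSet_fromEdgeSet] at this
          have hfFS : f ∈ F ∪ S := Finset.mem_coe.mp this.1
          rcases Finset.mem_union.mp hfFS with hfF | hfS
          · exact (((Finset.mem_sdiff.mp (hF hfF)).2) hf).elim
          · exact hfS
        exact hSne (Finset.Subset.antisymm hS hsub)
      · rcases Finset.mem_union.mp hmem' with hfF | hfS
        · exact Finset.mem_coe.mpr hfF
        · exact absurd hfS heS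
    exact ⟨u.transfer _ hedges, hu.transfer _, by rwa [SimpleGraph.Walk.length_transfer]⟩
  · rintro ⟨u, hu, hlen⟩
    have hedges : ∀ e ∈ u.edges,
        e ∈ (SimpleGraph.fromEdgeSet (↑(F ∪ S) : Set (Sym2 V))).edgeSet := by
      intro e he
      have he' := u.edges_subset_edgeSet he
      rw [SimpleGraph.edgeSet_fromEdgeSet] at he' ⊢
      exact ⟨Finset.mem_coe.mpr (Finset.mem_union_left _ (Finset.mem_coe.mp he'.1)), he'.2⟩
    exact ⟨u.transfer _ hedges, hu.transfer _, by rwa [SimpleGraph.Walk.length_transfer]⟩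

/-- Summing over the powerset of a disjoint union. -/
lemma sum_powerset_union {α β : Type*} [DecidableEq α] [AddCommMonoid β]
    {A B : Finset α} (hAB : Disjoint A B) (f : Finset α → β) :
    ∑ E' ∈ (A ∪ B).powerset, f E'
      = ∑ F ∈ A.powerset, ∑ S ∈ B.powerset, f (F ∪ S) := by
  classical
  rw [← Finset.sum_product']
  refine (Finset.sum_nbij' (i := fun E' => (E' ∩ A, E' ∩ B))
    (j := fun x => x.1 ∪ x.2) ?_ ?_ ?_ ?_ ?_).symm.symm
  · intro E' hE'
    rw [Finset.mem_powerset] at hE'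
    rw [Finset.mem_product]
    exact ⟨Finset.mem_powerset.mpr (Finset.inter_subset_right),
      Finset.mem_powerset.mpr (Finset.inter_subset_right)⟩
  · intro x hx
    rw [Finset.mem_product] at hx
    rw [Finset.mem_powerset]
    exact Finset.union_subset
      ((Finset.mem_powerset.mp hx.1).trans Finset.subset_union_left)
      ((Finset.mem_powerset.mp hx.2).trans Finset.subset_union_right)
  · intro E' hE'
    rw [Finset.mem_powerset] at hE'
    show E' ∩ A ∪ E' ∩ B = E'
    rw [← Finset.inter_union_distrib_left]
    exact Finset.inter_eq_left.mpr hE'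
  · intro x hx
    rw [Finset.mem_product, Finset.mem_powerset, Finset.mem_powerset] at hx
    have h1 : (x.1 ∪ x.2) ∩ A = x.1 := by
      ext e
      simp only [Finset.mem_inter, Finset.mem_union]
      constructor
      · rintro ⟨h | h, hA⟩
        · exact h
        · exact absurd hA (Finset.disjoint_right.mp hAB (hx.2 h))
      · intro h; exact ⟨Or.inl h, hx.1 h⟩
    have h2 : (x.1 ∪ x.2) ∩ B = x.2 := by
      ext e
      simp only [Finset.mem_inter, Finset.mem_union]
      constructor
      · rintro ⟨h | h, hB⟩
        · exact absurd hB (Finset.disjoint_left.mp hAB (hx.1 h))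
        · exact h
      · intro h; exact ⟨Or.inr h, hx.2 h⟩
    show ((x.1 ∪ x.2) ∩ A, (x.1 ∪ x.2) ∩ B) = x
    rw [h1, h2]
  · intro E' hE'
    rw [Finset.mem_powerset] at hE'
    show f E' = f (E' ∩ A ∪ E' ∩ B)
    rw [← Finset.inter_union_distrib_left, Finset.inter_eq_left.mpr hE']

/-- The inner sum over subsets of the path edges. -/
lemma inner_sum {α : Type*} [DecidableEq α] (A P F : Finset α) (hdisj : Disjoint A P)
    (hF : F ⊆ A) (r : α → ℝ) (Φ : Finset α → ℝ)
    (hΦ : ∀ S ⊆ P, S ≠ P → Φ (F ∪ S) = Φ F) :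
    ∑ S ∈ P.powerset,
        (∏ e ∈ F ∪ S, r e) * (∏ e ∈ (A ∪ P) \ (F ∪ S), (1 - r e)) * Φ (F ∪ S)
      = ((∏ e ∈ F, r e) * ∏ e ∈ A \ F, (1 - r e)) *
          ((∏ e ∈ P, r e) * Φ (F ∪ P) + (1 - ∏ e ∈ P, r e) * Φ F) := by
  classical
  have hstep : ∀ S ∈ P.powerset,
      (∏ e ∈ F ∪ S, r e) * (∏ e ∈ (A ∪ P) \ (F ∪ S), (1 - r e)) * Φ (F ∪ S)
        = ((∏ e ∈ F, r e) * ∏ e ∈ A \ F, (1 - r e)) *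
            ((∏ e ∈ S, r e) * ∏ e ∈ P \ S, (1 - r e)) * Φ (F ∪ S) := by
    intro S hS
    rw [Finset.mem_powerset] at hS
    have hdFS : Disjoint F S := Finset.disjoint_of_subset_left hF
      (Finset.disjoint_of_subset_right hS hdisj)
    have hsd : (A ∪ P) \ (F ∪ S) = (A \ F) ∪ (P \ S) := by
      ext e
      simp only [Finset.mem_sdiff, Finset.mem_union, not_or]
      constructor
      · rintro ⟨hAP, hF', hS'⟩
        rcases hAP with h | h
        · exact Or.inl ⟨h, hF'⟩
        · exact Or.inr ⟨h, hS'⟩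
      · rintro (⟨h1, h2⟩ | ⟨h1, h2⟩)
        · exact ⟨Or.inl h1, h2, fun hs => Finset.disjoint_left.mp hdisj h1 (hS hs)⟩
        · exact ⟨Or.inr h1, fun hf => Finset.disjoint_left.mp hdisj (hF hf) h1, h2⟩
    have hdAFPS : Disjoint (A \ F) (P \ S) :=
      Finset.disjoint_of_subset_left Finset.sdiff_subset
        (Finset.disjoint_of_subset_right Finset.sdiff_subset hdisj)
    rw [Finset.prod_union hdFS, hsd, Finset.prod_union hdAFPS]
    ring
  rw [Finset.sum_congr rfl hstep]
  rw [← Finset.add_sum_erase _ _ (Finset.mem_powerset_self P)]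
  have herase : ∑ S ∈ (P.powerset.erase P),
      ((∏ e ∈ F, r e) * ∏ e ∈ A \ F, (1 - r e)) *
        ((∏ e ∈ S, r e) * ∏ e ∈ P \ S, (1 - r e)) * Φ (F ∪ S)
      = ((∏ e ∈ F, r e) * ∏ e ∈ A \ F, (1 - r e)) * Φ F *
          ∑ S ∈ (P.powerset.erase P), ((∏ e ∈ S, r e) * ∏ e ∈ P \ S, (1 - r e)) := by
    rw [Finset.mul_sum]
    refine Finset.sum_congr rfl ?_
    intro S hS
    have hSP : S ⊆ P := Finset.mem_powerset.mp (Finset.mem_of_mem_erase hS)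
    have hSne : S ≠ P := Finset.ne_of_mem_erase hS
    rw [hΦ S hSP hSne]
    ring
  rw [herase]
  have hsum1 : ∑ S ∈ P.powerset, ((∏ e ∈ S, r e) * ∏ e ∈ P \ S, (1 - r e)) = 1 := by
    rw [← Finset.prod_add]
    simp
  have hsum2 : ∑ S ∈ (P.powerset.erase P), ((∏ e ∈ S, r e) * ∏ e ∈ P \ S, (1 - r e))
      = 1 - ∏ e ∈ P, r e := by
    have h := Finset.add_sum_erase _ (fun S => ((∏ e ∈ S, r e) * ∏ e ∈ P \ S, (1 - r e)))
      (Finset.mem_powerset_self P)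
    simp only [Finset.sdiff_self, Finset.prod_empty, mul_one, hsum1] at h
    linarith
  rw [hsum2, Finset.sdiff_self, Finset.prod_empty]
  ring

end PerfectPathAux

/-- Perfect-Path: let `P` be an induced path of `G` (from `a` to `b`)
all of whose internal vertices are non-terminal and of degree 2 in `G`.  Replacing the
reliabilities of all edges of `P` but the last by `1`, and that of the last edge by the
product of the reliabilities of all edges of `P`, leaves the diameter-constrained
reliability unchanged. -/
theorem dcr_perfect_path
    {V : Type*} [Fintype V] [DecidableEq V] (G : SimpleGraph V) [DecidableRel G.Adj]
    (s t : V) (hst : s ≠ t) (d : ℕ) (hd : 1 ≤ d)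
    (p : Sym2 V → ℝ) (hp : ∀ e ∈ G.edgeSet, 0 ≤ p e ∧ p e ≤ 1)
    (a b : V) (w : G.Walk a b) (hw : w.IsPath)
    (hind : ∀ u v : V, u ∈ w.support → v ∈ w.support → G.Adj u v → s(u, v) ∈ w.edges)
    (hint : ∀ v ∈ w.support, v ≠ a → v ≠ b → v ≠ s ∧ v ≠ t ∧ G.degree v = 2) :
    DCR G.edgeFinset s t d p
      = DCR G.edgeFinset s t d
          (fun e => if e ∈ w.edges.dropLast then 1
                    else if e ∈ w.edges then (w.edges.map p).prod
                    else p e) := by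
  classical
  set p' : Sym2 V → ℝ := fun e => if e ∈ w.edges.dropLast then 1
                    else if e ∈ w.edges then (w.edges.map p).prod
                    else p e with hp'def
  set P : Finset (Sym2 V) := w.edges.toFinset with hPdef
  have hnodup : w.edges.Nodup := hw.isTrail.edges_nodup
  have hPsub : P ⊆ G.edgeFinset := fun e he =>
    SimpleGraph.mem_edgeFinset.mpr (w.edges_subset_edgeSet (List.mem_toFinset.mp he))
  set A : Finset (Sym2 V) := G.edgeFinset \ P with hAdef
  have hdisj : Disjoint A P := Finset.sdiff_disjoint
  have hUnion : G.edgeFinset = A ∪ P := by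
    rw [hAdef, Finset.sdiff_union_of_subset hPsub]
  -- `p'` agrees with `p` outside `P`
  have hp'A : ∀ e ∉ P, p' e = p e := by
    intro e he
    have hne : e ∉ w.edges := fun h => he (List.mem_toFinset.mpr h)
    have hnd : e ∉ w.edges.dropLast := fun h => hne (List.dropLast_subset _ h)
    simp only [hp'def, if_neg hnd, if_neg hne]
  -- products over `P` agree
  have hPprod : ∏ e ∈ P, p' e = ∏ e ∈ P, p e := by
    rw [hPdef, List.prod_toFinset _ hnodup, List.prod_toFinset _ hnodup]
    by_cases hnil : w.edges = []
    · rw [hnil]; simp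
    · conv_lhs => rw [← List.dropLast_append_getLast hnil]
      rw [List.map_append, List.prod_append, List.map_singleton, List.prod_singleton]
      have hlast_mem : w.edges.getLast hnil ∈ w.edges := List.getLast_mem hnil
      have hlast_nd : w.edges.getLast hnil ∉ w.edges.dropLast := by
        have := hnodup
        conv at this => rw [← List.dropLast_append_getLast hnil]
        rw [List.nodup_append] at this
        intro hmem
        exact this.2.2 _ hmem _ (List.mem_singleton_self _) rfl
      have h1 : (w.edges.dropLast.map p').prod = 1 := by
        apply List.prod_eq_one
        intro x hx
        rw [List.mem_map] at hx
        obtain ⟨e, he, rfl⟩ := hx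
        simp only [hp'def, if_pos he]
      have h2 : p' (w.edges.getLast hnil) = (w.edges.map p).prod := by
        simp only [hp'def, if_neg hlast_nd, if_pos hlast_mem]
      rw [h1, h2, one_mul]
  -- the `φ` invariance
  have hΦ : ∀ F ⊆ A, ∀ S ⊆ P, S ≠ P →
      ((if PhiStruct s t d (F ∪ S) then (1 : ℝ) else 0)
        = (if PhiStruct s t d F then (1 : ℝ) else 0)) := by
    intro F hF S hS hSne
    have := PerfectPathAux.phi_eq G s t d w hw hint (F := F) (S := S)
      (by rwa [← hAdef]) hS hSne
    simp only [this]
  -- main computation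
  unfold DCR
  rw [hUnion]
  rw [PerfectPathAux.sum_powerset_union hdisj, PerfectPathAux.sum_powerset_union hdisj]
  refine Finset.sum_congr rfl ?_
  intro F hF
  rw [Finset.mem_powerset] at hF
  rw [PerfectPathAux.inner_sum A P F hdisj hF p
        (fun X => if PhiStruct s t d X then (1 : ℝ) else 0) (hΦ F hF),
      PerfectPathAux.inner_sum A P F hdisj hF p'
        (fun X => if PhiStruct s t d X then (1 : ℝ) else 0) (hΦ F hF)]
  have hFprod : ∏ e ∈ F, p' e = ∏ e ∈ F, p e :=
    Finset.prod_congr rfl fun e he =>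
      hp'A e (Finset.disjoint_left.mp hdisj (hF he))
  have hAFprod : ∏ e ∈ A \ F, (1 - p' e) = ∏ e ∈ A \ F, (1 - p e) :=
    Finset.prod_congr rfl fun e he => by
      rw [hp'A e (Finset.disjoint_left.mp hdisj (Finset.mem_sdiff.mp he).1)]
  rw [hFprod, hAFprod, hPprod]
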